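/- arXiv:2109.09234 — 2 statements merged into one kernel-verified Lean document; each statement's English description precedes it below -/
import Mathlib

section
/- From a Xu predictive family one obtains a multivariable predictive family: Let U be a Xu predictive family over 𝒳 and 𝒴, and define V(U) := ⋃_{f ∈ U} {g_f, g'_f}, where g_f(x) := f(x) and g'_f(x) := f(∅) for all x ∈ 𝒳. Then V(U) is a single-variable multivariable predictive family: for every h ∈ V(U) and every x ∈ 𝒳 there exists h' ∈ V(U) with h'(x') = h(x) for all x' ∈ 𝒳. -/
open MeasureTheory

/-- `-log p`, valued in `[0,∞]` (with `-log 0 = ∞`). -/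
noncomputable def negLog (p : ENNReal) : ENNReal :=
  if p = 0 then ⊤ else ENNReal.ofReal (-Real.log p.toReal)

/-- A Xu predictive family (Xu et al. 2020): a set `U` of functions from
`𝒳 ∪ {∅}` (modeled as `Option 𝒳`, with `none` the null symbol `∅`) to
probability mass functions over `𝒴`, such that for every `f ∈ U` and every
`P` in the range of `f`, there is `f' ∈ U` with `f' x = P` for all `x ∈ 𝒳`
and `f' ∅ = P` (optional ignorance). -/
def IsXuPredictiveFamily {𝒳 𝒴 : Type*} (U : Set (Option 𝒳 → PMF 𝒴)) : Prop :=
  ∀ f ∈ U, ∀ Q ∈ Set.range f, ∃ f' ∈ U,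
    (∀ x : 𝒳, f' (some x) = Q) ∧ f' none = Q

/-- A single-variable multivariable predictive family: for every `h ∈ V` and
every `x ∈ 𝒳` there exists `h' ∈ V` with `h' x' = h x` for all `x' ∈ 𝒳`
(multivariable optional ignorance in the single-variable case). -/
def IsSingleVarPredictiveFamily {𝒳 𝒴 : Type*} (V : Set (𝒳 → PMF 𝒴)) : Prop :=
  ∀ h ∈ V, ∀ x : 𝒳, ∃ h' ∈ V, ∀ x' : 𝒳, h' x' = h x

/-- The Xu-to-multivariable construction `V(U) := ⋃_{f ∈ U} {g_f, g'_f}`,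
where `g_f x := f x` and `g'_f x := f ∅` for all `x ∈ 𝒳`. -/
def VofU {𝒳 𝒴 : Type*} (U : Set (Option 𝒳 → PMF 𝒴)) : Set (𝒳 → PMF 𝒴) :=
  ⋃ f ∈ U, {fun x => f (some x), fun _ => f none}

/-- `g_f`: the extension of `f : 𝒳 → 𝒫(𝒴)` to `𝒳 ∪ {∅}` with `g_f ∅ := f ā`. -/
def gOf {𝒳 𝒴 : Type*} (f : 𝒳 → PMF 𝒴) (a : 𝒳) : Option 𝒳 → PMF 𝒴 :=
  fun o => o.elim (f a) f

/-- The multivariable-to-Xu construction `U(V) := ⋃_{f ∈ V} ({g_f} ∪ G_f)`,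
where `g_f (some x) := f x`, `g_f ∅ := f ā`, and `G_f` is the set of all
constant functions on `𝒳 ∪ {∅}` taking a value `P` in the range of `g_f`. -/
def UofV {𝒳 𝒴 : Type*} (V : Set (𝒳 → PMF 𝒴)) (a : 𝒳) : Set (Option 𝒳 → PMF 𝒴) :=
  ⋃ f ∈ V, ({gOf f a} ∪ {g | ∃ Q ∈ Set.range (gOf f a), g = fun _ => Q})

/-- `H_U(Y|X)` for a set `U` of functions on `𝒳 ∪ {∅}`. -/
noncomputable def xuEntropyCond {Ω 𝒳 𝒴 : Type*} [MeasurableSpace Ω]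
    (P : Measure Ω) (U : Set (Option 𝒳 → PMF 𝒴)) (X : Ω → 𝒳) (Y : Ω → 𝒴) : ENNReal :=
  ⨅ f ∈ U, ∫⁻ ω, negLog (f (some (X ω)) (Y ω)) ∂P

/-- `H_U(Y|∅)` for a set `U` of functions on `𝒳 ∪ {∅}`. -/
noncomputable def xuEntropyNull {Ω 𝒳 𝒴 : Type*} [MeasurableSpace Ω]
    (P : Measure Ω) (U : Set (Option 𝒳 → PMF 𝒴)) (Y : Ω → 𝒴) : ENNReal :=
  ⨅ f ∈ U, ∫⁻ ω, negLog (f none (Y ω)) ∂P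

/-- `H_V(Y|X)` for a set `V` of functions on `𝒳`. -/
noncomputable def svEntropyCond {Ω 𝒳 𝒴 : Type*} [MeasurableSpace Ω]
    (P : Measure Ω) (V : Set (𝒳 → PMF 𝒴)) (X : Ω → 𝒳) (Y : Ω → 𝒴) : ENNReal :=
  ⨅ h ∈ V, ∫⁻ ω, negLog (h (X ω) (Y ω)) ∂P

/-- `H_V(Y)` for a set `V` of functions on `𝒳`, computed with the
informationless constant `a ∈ 𝒳`. -/
noncomputable def svEntropyConst {Ω 𝒳 𝒴 : Type*} [MeasurableSpace Ω]
    (P : Measure Ω) (V : Set (𝒳 → PMF 𝒴)) (a : 𝒳) (Y : Ω → 𝒴) : ENNReal :=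
  ⨅ h ∈ V, ∫⁻ ω, negLog (h a (Y ω)) ∂P

/-- From a Xu predictive family `U` over `𝒳` and `𝒴`, the
construction `V(U)` is a single-variable multivariable predictive family. -/
theorem VofU_isSingleVarPredictiveFamily {𝒳 𝒴 : Type*} [Nonempty 𝒳]
    [Fintype 𝒴] [Nonempty 𝒴]
    (U : Set (Option 𝒳 → PMF 𝒴)) (hU : IsXuPredictiveFamily U) :
    IsSingleVarPredictiveFamily (VofU U) := by
  intro h hh x
  simp only [VofU, Set.mem_iUnion, Set.mem_insert_iff, Set.mem_singleton_iff] at hh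
  obtain ⟨f, hf, hcase⟩ := hh
  have hQ : h x ∈ Set.range f := by
    rcases hcase with rfl | rfl
    · exact ⟨some x, rfl⟩
    · exact ⟨none, rfl⟩
  obtain ⟨f', hf', hall, hnone⟩ := hU f hf (h x) hQ
  refine ⟨fun _ => f' none, ?_, fun x' => hnone⟩
  simp only [VofU, Set.mem_iUnion, Set.mem_insert_iff, Set.mem_singleton_iff]
  exact ⟨f', hf', Or.inr rfl⟩
end

section
/- Conditional entropy is preserved by the multivariable-to-Xu construction: Let V be a single-variable multivariable predictive family over 𝒳 and 𝒴, fix ā ∈ 𝒳, and define U(V) := ⋃_{f ∈ V} ({g_f} ∪ G_f), where g_f(x) := f(x) for x ∈ 𝒳, g_f(∅) := f(ā), and G_f is the set of all constant functions on 𝒳 ∪ {∅} taking a value P in the range of g_f. Then H_{U(V)}(Y|X) = H_V(Y|X), i.e., inf_{g ∈ U(V)} E[−log g(X)(Y)] = inf_{h ∈ V} E[−log h(X)(Y)]. -/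
open MeasureTheory

/-- Conditional entropy is preserved by the
multivariable-to-Xu construction: `H_{U(V)}(Y|X) = H_V(Y|X)`. -/
theorem xuEntropyCond_UofV_eq_svEntropyCond {Ω 𝒳 𝒴 : Type*}
    [MeasurableSpace Ω] [MeasurableSpace 𝒳] [Nonempty 𝒳]
    [Fintype 𝒴] [Nonempty 𝒴] [MeasurableSpace 𝒴]
    (P : Measure Ω) [IsProbabilityMeasure P]
    (X : Ω → 𝒳) (Y : Ω → 𝒴) (hX : Measurable X) (hY : Measurable Y)
    (V : Set (𝒳 → PMF 𝒴)) (hV : IsSingleVarPredictiveFamily V) (a : 𝒳) :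
    xuEntropyCond P (UofV V a) X Y = svEntropyCond P V X Y := by
  apply le_antisymm
  · -- ≤ : for each f ∈ V, gOf f a ∈ UofV and has the same loss
    refine le_iInf₂ fun f hf => ?_
    have hmem : gOf f a ∈ UofV V a := by
      refine Set.mem_biUnion hf ?_
      exact Or.inl rfl
    refine iInf₂_le_of_le (gOf f a) hmem (le_of_eq ?_)
    rfl
  · -- ≥ : each g ∈ UofV is matched by some h ∈ V with equal loss
    refine le_iInf₂ fun g hg => ?_
    rcases Set.mem_iUnion₂.1 hg with ⟨f, hf, hgmem⟩
    rcases hgmem with h | ⟨Q, ⟨o, hQ⟩, rfl⟩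
    · -- g = gOf f a
      rcases h with rfl
      refine iInf₂_le_of_le f hf (le_of_eq ?_)
      rfl
    · -- g = const Q, Q = gOf f a o = f x₀ for some x₀
      obtain ⟨x₀, hx₀⟩ : ∃ x₀, f x₀ = Q := by
        cases o with
        | none => exact ⟨a, hQ⟩
        | some x => exact ⟨x, hQ⟩
      obtain ⟨h', hh', hval⟩ := hV f hf x₀
      refine iInf₂_le_of_le h' hh' (le_of_eq ?_)
      simp only [hval, hx₀]
end
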